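/- Ambiguous-case direction of the generative-model dichotomy: if a supergroup H ⊇ G* of subgroups of S_M preserves every G*-orbit on Fin M × Fin M (i.e., every function constant on G*-orbits is constant on H-orbits), then the commutants coincide, A_{G*} = A_H, and consequently for any matrix W the Reynolds projections satisfy P_{G*}(W) = P_H(W) and every h ∈ H commutes with R = P_{G*}(W). -/

import Mathlib

open scoped Matrix

/-- Permutation matrix of `σ` over `ℂ`. -/
def permMat {M : ℕ} (σ : Equiv.Perm (Fin M)) : Matrix (Fin M) (Fin M) ℂ :=
  Matrix.of fun i j => if σ i = j then 1 else 0

/-- Reynolds operator of a subgroup `G ⊆ S_M`. -/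
noncomputable def reynolds {M : ℕ} (G : Subgroup (Equiv.Perm (Fin M)))
    (X : Matrix (Fin M) (Fin M) ℂ) : Matrix (Fin M) (Fin M) ℂ :=
  letI : Fintype G := Fintype.ofFinite G
  ((Nat.card G : ℂ)⁻¹) • ∑ g : G, permMat (g : Equiv.Perm (Fin M)) * X *
    (permMat (g : Equiv.Perm (Fin M)))ᵀ

lemma permMat_mul_apply {M : ℕ} (σ : Equiv.Perm (Fin M)) (X : Matrix (Fin M) (Fin M) ℂ)
    (i j : Fin M) : (permMat σ * X) i j = X (σ i) j := by
  simp [permMat, Matrix.mul_apply]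

lemma mul_permMat_apply {M : ℕ} (σ : Equiv.Perm (Fin M)) (X : Matrix (Fin M) (Fin M) ℂ)
    (i j : Fin M) : (X * permMat σ) i j = X i (σ⁻¹ j) := by
  have : ∀ k : Fin M, σ k = j ↔ k = σ⁻¹ j := by
    intro k; constructor
    · intro h; simp [← h]
    · intro h; simp [h]
  simp only [permMat, Matrix.mul_apply, Matrix.of_apply]
  rw [Finset.sum_congr rfl (fun k _ => by rw [if_congr (this k) rfl rfl])]
  simp

lemma permMat_transpose {M : ℕ} (σ : Equiv.Perm (Fin M)) :
    (permMat σ)ᵀ = permMat σ⁻¹ := by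
  ext i j
  by_cases h : σ j = i
  · subst h; simp [permMat]
  · have h2 : σ⁻¹ i ≠ j := fun hh => h (by simp [← hh])
    simp [permMat, h, h2]; exact h2

lemma permMat_mul_permMat {M : ℕ} (σ τ : Equiv.Perm (Fin M)) :
    permMat σ * permMat τ = permMat (τ * σ) := by
  ext i j
  rw [permMat_mul_apply]
  simp [permMat]; split_ifs <;> simp_all

lemma permMat_one {M : ℕ} : permMat (1 : Equiv.Perm (Fin M)) = 1 := by
  ext i j
  simp [permMat, Matrix.one_apply]; split_ifs <;> simp_all

lemma permMat_mul_transpose {M : ℕ} (σ : Equiv.Perm (Fin M)) :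
    permMat σ * (permMat σ)ᵀ = 1 := by
  rw [permMat_transpose, permMat_mul_permMat, inv_mul_cancel, permMat_one]

lemma transpose_mul_permMat {M : ℕ} (σ : Equiv.Perm (Fin M)) :
    (permMat σ)ᵀ * permMat σ = 1 := by
  rw [permMat_transpose, permMat_mul_permMat, mul_inv_cancel, permMat_one]

/-- Commuting with a permutation matrix is invariance of entries under the diagonal action. -/
lemma comm_iff {M : ℕ} (σ : Equiv.Perm (Fin M)) (X : Matrix (Fin M) (Fin M) ℂ) :
    permMat σ * X = X * permMat σ ↔ ∀ i j, X (σ i) (σ j) = X i j := by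
  constructor
  · intro h i j
    have h' := congrFun (congrFun h i) (σ j)
    rw [permMat_mul_apply, mul_permMat_apply] at h'
    simpa using h'
  · intro h
    ext i j
    rw [permMat_mul_apply, mul_permMat_apply]
    have := h i (σ⁻¹ j)
    simpa using this

lemma card_ne_zero {M : ℕ} (G : Subgroup (Equiv.Perm (Fin M))) :
    (Nat.card G : ℂ) ≠ 0 := by
  simp [Nat.card_pos.ne']

lemma conj_eq {M : ℕ} (σ τ : Equiv.Perm (Fin M)) (W : Matrix (Fin M) (Fin M) ℂ) :
    permMat σ * (permMat τ * W * (permMat τ)ᵀ) * (permMat σ)ᵀ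
      = permMat (τ * σ) * W * (permMat (τ * σ))ᵀ := by
  calc permMat σ * (permMat τ * W * (permMat τ)ᵀ) * (permMat σ)ᵀ
      = (permMat σ * permMat τ) * W * ((permMat τ)ᵀ * (permMat σ)ᵀ) := by
        simp only [mul_assoc]
    _ = permMat (τ * σ) * W * (permMat (τ * σ))ᵀ := by
        simp only [permMat_transpose, permMat_mul_permMat, mul_inv_rev]

lemma reynolds_comm {M : ℕ} (G : Subgroup (Equiv.Perm (Fin M)))
    (W : Matrix (Fin M) (Fin M) ℂ) {g : Equiv.Perm (Fin M)} (hg : g ∈ G) :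
    permMat g * reynolds G W = reynolds G W * permMat g := by
  letI : Fintype G := Fintype.ofFinite G
  have key : permMat g * reynolds G W * (permMat g)ᵀ = reynolds G W := by
    unfold reynolds
    rw [Matrix.mul_smul, Matrix.smul_mul]
    congr 1
    rw [Matrix.mul_sum, Finset.sum_mul]
    refine Fintype.sum_equiv (Equiv.mulRight (⟨g, hg⟩ : G))
      (fun h => permMat g * (permMat (h : Equiv.Perm (Fin M)) * W *
        (permMat (h : Equiv.Perm (Fin M)))ᵀ) * (permMat g)ᵀ) _ (fun h => ?_)
    simpa using conj_eq g (h : Equiv.Perm (Fin M)) W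
  calc permMat g * reynolds G W
      = permMat g * reynolds G W * ((permMat g)ᵀ * permMat g) := by
        rw [transpose_mul_permMat, mul_one]
    _ = (permMat g * reynolds G W * (permMat g)ᵀ) * permMat g := by
        simp [mul_assoc]
    _ = reynolds G W * permMat g := by rw [key]

lemma reynolds_smul {M : ℕ} (G : Subgroup (Equiv.Perm (Fin M))) (a : ℂ)
    (X : Matrix (Fin M) (Fin M) ℂ) : reynolds G (a • X) = a • reynolds G X := by
  unfold reynolds
  simp only [Matrix.mul_smul, Matrix.smul_mul, ← Finset.smul_sum]
  exact smul_comm _ _ _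

lemma reynolds_sum {M : ℕ} {ι : Type*} (G : Subgroup (Equiv.Perm (Fin M)))
    (s : Finset ι) (f : ι → Matrix (Fin M) (Fin M) ℂ) :
    reynolds G (∑ i ∈ s, f i) = ∑ i ∈ s, reynolds G (f i) := by
  unfold reynolds
  rw [← Finset.smul_sum]
  congr 1
  rw [Finset.sum_comm]
  refine Finset.sum_congr rfl (fun g _ => ?_)
  rw [Matrix.mul_sum, Matrix.sum_mul]

lemma reynolds_conj {M : ℕ} (H : Subgroup (Equiv.Perm (Fin M)))
    (W : Matrix (Fin M) (Fin M) ℂ) {g : Equiv.Perm (Fin M)} (hg : g ∈ H) :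
    reynolds H (permMat g * W * (permMat g)ᵀ) = reynolds H W := by
  letI : Fintype H := Fintype.ofFinite H
  unfold reynolds
  congr 1
  refine Fintype.sum_equiv (Equiv.mulLeft (⟨g, hg⟩ : H))
    (fun h => permMat (h : Equiv.Perm (Fin M)) * (permMat g * W * (permMat g)ᵀ) *
      (permMat (h : Equiv.Perm (Fin M)))ᵀ) _ (fun h => ?_)
  simpa using conj_eq (h : Equiv.Perm (Fin M)) g W

lemma reynolds_fixed {M : ℕ} (H : Subgroup (Equiv.Perm (Fin M)))
    (R : Matrix (Fin M) (Fin M) ℂ)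
    (hcom : ∀ h ∈ H, permMat h * R = R * permMat h) :
    reynolds H R = R := by
  letI : Fintype H := Fintype.ofFinite H
  unfold reynolds
  have : ∀ h : H, permMat (h : Equiv.Perm (Fin M)) * R *
      (permMat (h : Equiv.Perm (Fin M)))ᵀ = R := by
    intro h
    rw [hcom _ h.2, mul_assoc, permMat_mul_transpose, mul_one]
  rw [Finset.sum_congr rfl (fun h _ => this h), Finset.sum_const, Finset.card_univ,
    ← Nat.cast_smul_eq_nsmul ℂ, smul_smul, ← Nat.card_eq_fintype_card,
    inv_mul_cancel₀ (card_ne_zero H), one_smul]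

/-- ambiguous case of the generative-model dichotomy: if `H ⊇ G*`
preserves every `G*`-orbit on pairs (every function constant on `G*`-orbits is
constant on `H`-orbits), then the commutants coincide, the Reynolds projections
agree, and every `h ∈ H` commutes with `R = P_{G*}(W)`. -/
theorem stmt17 {M : ℕ} (Gstar H : Subgroup (Equiv.Perm (Fin M))) (hle : Gstar ≤ H)
    (horb : ∀ f : Fin M × Fin M → ℂ,
        (∀ g ∈ Gstar, ∀ p : Fin M × Fin M, f (g p.1, g p.2) = f p) →
        (∀ h ∈ H, ∀ p : Fin M × Fin M, f (h p.1, h p.2) = f p)) :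
    (∀ X : Matrix (Fin M) (Fin M) ℂ,
        (∀ g ∈ Gstar, permMat g * X = X * permMat g) ↔
          (∀ h ∈ H, permMat h * X = X * permMat h)) ∧
    (∀ W : Matrix (Fin M) (Fin M) ℂ, reynolds Gstar W = reynolds H W) ∧
    (∀ W : Matrix (Fin M) (Fin M) ℂ, ∀ h ∈ H,
        permMat h * reynolds Gstar W = reynolds Gstar W * permMat h) := by
  have part1 : ∀ X : Matrix (Fin M) (Fin M) ℂ,
      (∀ g ∈ Gstar, permMat g * X = X * permMat g) ↔
        (∀ h ∈ H, permMat h * X = X * permMat h) := by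
    intro X
    constructor
    · intro hG h hh
      rw [comm_iff]
      intro i j
      have hf : ∀ g ∈ Gstar, ∀ p : Fin M × Fin M,
          (fun p : Fin M × Fin M => X p.1 p.2) (g p.1, g p.2)
            = (fun p : Fin M × Fin M => X p.1 p.2) p := by
        intro g hg p
        exact (comm_iff g X).1 (hG g hg) p.1 p.2
      exact horb (fun p : Fin M × Fin M => X p.1 p.2) hf h hh (i, j)
    · intro hH g hg
      exact hH g (hle hg)
  have part3 : ∀ W : Matrix (Fin M) (Fin M) ℂ, ∀ h ∈ H,
      permMat h * reynolds Gstar W = reynolds Gstar W * permMat h := by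
    intro W h hh
    exact (part1 (reynolds Gstar W)).1 (fun g hg => reynolds_comm Gstar W hg) h hh
  refine ⟨part1, fun W => ?_, part3⟩
  have h1 : reynolds H (reynolds Gstar W) = reynolds Gstar W :=
    reynolds_fixed H _ (part3 W)
  have h2 : reynolds H (reynolds Gstar W) = reynolds H W := by
    letI : Fintype Gstar := Fintype.ofFinite Gstar
    rw [show reynolds Gstar W = ((Nat.card Gstar : ℂ)⁻¹) •
        ∑ g : Gstar, permMat (g : Equiv.Perm (Fin M)) * W *
          (permMat (g : Equiv.Perm (Fin M)))ᵀ from rfl]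
    rw [reynolds_smul, reynolds_sum]
    rw [Finset.sum_congr rfl (fun g _ => reynolds_conj H W (hle g.2))]
    rw [Finset.sum_const, Finset.card_univ, ← Nat.cast_smul_eq_nsmul ℂ, smul_smul,
      ← Nat.card_eq_fintype_card, inv_mul_cancel₀ (card_ne_zero Gstar), one_smul]
  rw [← h1, h2]
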